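/- Let S = {(−1,0),(−1,1),(0,1),(1,−1)} and for z ∈ (0,1/4) define d(x;z) = (z−x)² − 4z²x²(1+x). Then for every z ∈ (0,1/4), the cubic polynomial x ↦ d(x;z) has exactly three real roots, all simple, denoted x₁(z) < x₂(z) < x₃(z), and they satisfy 0 < x₁(z) < x₂(z) < 1 < x₃(z). Moreover d(x;z) > 0 for x ∈ (−∞, x₁(z)) ∪ (x₂(z), x₃(z)) and d(x;z) < 0 for x ∈ (x₁(z), x₂(z)) ∪ (x₃(z), +∞). -/

import Mathlib

/-- The discriminant `d(x; z) = (z − x)² − 4z²x²(1 + x)` of the kernel of the walk with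
step set `S = {(−1,0),(−1,1),(0,1),(1,−1)}`. -/
def ddisc (z x : ℝ) : ℝ := (z - x) ^ 2 - 4 * z ^ 2 * x ^ 2 * (1 + x)

lemma ddisc_continuous (z : ℝ) : Continuous (ddisc z) := by
  unfold ddisc; continuity

lemma cubic_hasDerivAt (c a b d x : ℝ) :
    HasDerivAt (fun x : ℝ => c * (x - a) * (x - b) * (x - d))
      (c * ((x - b) * (x - d) + (x - a) * (x - d) + (x - a) * (x - b))) x := by
  have h := ((((hasDerivAt_id x).sub_const a).const_mul c).fun_mul
      ((hasDerivAt_id x).sub_const b)).fun_mul ((hasDerivAt_id x).sub_const d)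
  convert h using 1
  all_goals first | rfl | (simp only [id_eq]; ring)

/-- For every `z ∈ (0,1/4)` the cubic `x ↦ d(x;z)` has exactly three real roots, all simple,
`0 < x₁ < x₂ < 1 < x₃`; moreover `d(·;z)` is positive on `(−∞,x₁) ∪ (x₂,x₃)` and negative
on `(x₁,x₂) ∪ (x₃,∞)`. -/
theorem ddisc_roots (z : ℝ) (hz : z ∈ Set.Ioo (0 : ℝ) (1 / 4)) :
    ∃ x1 x2 x3 : ℝ,
      0 < x1 ∧ x1 < x2 ∧ x2 < 1 ∧ 1 < x3 ∧
      (∀ x : ℝ, ddisc z x = 0 ↔ (x = x1 ∨ x = x2 ∨ x = x3)) ∧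
      deriv (ddisc z) x1 ≠ 0 ∧ deriv (ddisc z) x2 ≠ 0 ∧ deriv (ddisc z) x3 ≠ 0 ∧
      (∀ x : ℝ, x < x1 → 0 < ddisc z x) ∧
      (∀ x : ℝ, x2 < x → x < x3 → 0 < ddisc z x) ∧
      (∀ x : ℝ, x1 < x → x < x2 → ddisc z x < 0) ∧
      (∀ x : ℝ, x3 < x → ddisc z x < 0) := by
  obtain ⟨hz0, hz4⟩ := hz
  have hzne : z ≠ 0 := ne_of_gt hz0
  have hcont : Continuous (ddisc z) := ddisc_continuous z
  -- values
  have hd0 : 0 < ddisc z 0 := by unfold ddisc; nlinarith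
  have hdz : ddisc z z < 0 := by unfold ddisc; nlinarith [pow_pos hz0 4]
  have hd1 : 0 < ddisc z 1 := by unfold ddisc; nlinarith
  have hM : (1 : ℝ) < 1 / z ^ 2 := by
    rw [lt_div_iff₀ (by positivity)]
    nlinarith
  have hdM : ddisc z (1 / z ^ 2) < 0 := by
    unfold ddisc
    have h2 : z ^ 2 > 0 := by positivity
    rw [div_pow, one_pow]
    have e : (z - 1 / z ^ 2) ^ 2 - 4 * z ^ 2 * (1 / (z ^ 2) ^ 2) * (1 + 1 / z ^ 2)
        = (z ^ 6 - 2 * z ^ 3 - 4 * z ^ 2 - 3) / z ^ 4 := by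
      field_simp
      ring
    rw [e]
    apply div_neg_of_neg_of_pos _ (by positivity)
    have hz1 : z < 1 := by linarith
    nlinarith [pow_lt_one₀ hz0.le hz1 (by norm_num : (6:ℕ) ≠ 0), pow_pos hz0 3, pow_pos hz0 2]
  -- roots by IVT
  have h1 : (0 : ℝ) ∈ Set.Ioo (ddisc z z) (ddisc z 0) := ⟨hdz, hd0⟩
  obtain ⟨x1, hx1mem, hx1⟩ := intermediate_value_Ioo' (le_of_lt hz0) hcont.continuousOn h1
  have h2 : (0 : ℝ) ∈ Set.Ioo (ddisc z z) (ddisc z 1) := ⟨hdz, hd1⟩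
  obtain ⟨x2, hx2mem, hx2⟩ := intermediate_value_Ioo (by linarith) hcont.continuousOn h2
  have h3 : (0 : ℝ) ∈ Set.Ioo (ddisc z (1 / z ^ 2)) (ddisc z 1) := ⟨hdM, hd1⟩
  obtain ⟨x3, hx3mem, hx3⟩ := intermediate_value_Ioo' (le_of_lt hM) hcont.continuousOn h3
  obtain ⟨hx1a, hx1b⟩ := hx1mem
  obtain ⟨hx2a, hx2b⟩ := hx2mem
  obtain ⟨hx3a, hx3b⟩ := hx3mem
  have h12 : x1 < x2 := lt_trans hx1b hx2a
  have h23 : x2 < x3 := lt_trans hx2b hx3a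
  have h13 : x1 < x3 := lt_trans h12 h23
  have hr1 : (z - x1) ^ 2 - 4 * z ^ 2 * x1 ^ 2 * (1 + x1) = 0 := hx1
  have hr2 : (z - x2) ^ 2 - 4 * z ^ 2 * x2 ^ 2 * (1 + x2) = 0 := hx2
  have hr3 : (z - x3) ^ 2 - 4 * z ^ 2 * x3 ^ 2 * (1 + x3) = 0 := hx3
  -- factorization
  set A : ℝ := 1 - 4 * z ^ 2 - 4 * z ^ 2 * (x1 + x2 + x3) with hA
  set B : ℝ := -2 * z + 4 * z ^ 2 * (x1 * x2 + x1 * x3 + x2 * x3) with hB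
  set C : ℝ := z ^ 2 - 4 * z ^ 2 * (x1 * x2 * x3) with hC
  have key : ∀ x : ℝ, (z - x) ^ 2 - 4 * z ^ 2 * x ^ 2 * (1 + x)
      + 4 * z ^ 2 * (x - x1) * (x - x2) * (x - x3) = A * x ^ 2 + B * x + C := by
    intro x
    rw [hA, hB, hC]
    ring
  have e1 : A * x1 ^ 2 + B * x1 + C = 0 := by linear_combination hr1 - key x1
  have e2 : A * x2 ^ 2 + B * x2 + C = 0 := by linear_combination hr2 - key x2
  have e3 : A * x3 ^ 2 + B * x3 + C = 0 := by linear_combination hr3 - key x3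
  have f12 : (x1 - x2) * (A * (x1 + x2) + B) = 0 := by linear_combination e1 - e2
  have f23 : (x2 - x3) * (A * (x2 + x3) + B) = 0 := by linear_combination e2 - e3
  have g12 : A * (x1 + x2) + B = 0 :=
    (mul_eq_zero.1 f12).resolve_left (sub_ne_zero.2 (ne_of_lt h12))
  have g23 : A * (x2 + x3) + B = 0 :=
    (mul_eq_zero.1 f23).resolve_left (sub_ne_zero.2 (ne_of_lt h23))
  have fA : (x1 - x3) * A = 0 := by linear_combination g12 - g23
  have hA0 : A = 0 := (mul_eq_zero.1 fA).resolve_left (sub_ne_zero.2 (ne_of_lt h13))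
  have hB0 : B = 0 := by linear_combination g12 - (x1 + x2) * hA0
  have hC0 : C = 0 := by linear_combination e1 - x1 ^ 2 * hA0 - x1 * hB0
  have fact : ∀ x : ℝ, ddisc z x = -(4 * z ^ 2) * (x - x1) * (x - x2) * (x - x3) := by
    intro x
    unfold ddisc
    linear_combination key x + x ^ 2 * hA0 + x * hB0 + hC0
  have hfun : ddisc z = fun x : ℝ => -(4 * z ^ 2) * (x - x1) * (x - x2) * (x - x3) :=
    funext fact
  have hz2 : (0 : ℝ) < z ^ 2 := by positivity
  have derivne : ∀ a b c : ℝ, a ≠ b → a ≠ c →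
      deriv (fun x : ℝ => -(4 * z ^ 2) * (x - a) * (x - b) * (x - c)) a ≠ 0 := by
    intro a b c hab hac
    rw [(cubic_hasDerivAt (-(4 * z ^ 2)) a b c a).deriv]
    have : -(4 * z ^ 2) * ((a - b) * (a - c) + (a - a) * (a - c) + (a - a) * (a - b))
        = -(4 * z ^ 2) * ((a - b) * (a - c)) := by ring
    rw [this]
    exact mul_ne_zero (neg_ne_zero.2 (by positivity))
      (mul_ne_zero (sub_ne_zero.2 hab) (sub_ne_zero.2 hac))
  refine ⟨x1, x2, x3, hx1a, h12, hx2b, hx3a, ?_, ?_, ?_, ?_, ?_, ?_, ?_, ?_⟩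
  · intro x
    rw [fact x]
    constructor
    · intro h
      rcases mul_eq_zero.1 h with h | h
      · rcases mul_eq_zero.1 h with h | h
        · rcases mul_eq_zero.1 h with h | h
          · exact absurd h (neg_ne_zero.2 (by positivity))
          · exact Or.inl (sub_eq_zero.1 h)
        · exact Or.inr (Or.inl (sub_eq_zero.1 h))
      · exact Or.inr (Or.inr (sub_eq_zero.1 h))
    · rintro (rfl | rfl | rfl) <;> ring
  · rw [hfun]; exact derivne x1 x2 x3 (ne_of_lt h12) (ne_of_lt h13)
  · rw [hfun]
    have h := derivne x2 x1 x3 (ne_of_gt h12) (ne_of_lt h23)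
    have e : (fun x : ℝ => -(4 * z ^ 2) * (x - x1) * (x - x2) * (x - x3))
        = fun x : ℝ => -(4 * z ^ 2) * (x - x2) * (x - x1) * (x - x3) := by
      funext x; ring
    rw [e]; exact h
  · rw [hfun]
    have h := derivne x3 x1 x2 (ne_of_gt h13) (ne_of_gt h23)
    have e : (fun x : ℝ => -(4 * z ^ 2) * (x - x1) * (x - x2) * (x - x3))
        = fun x : ℝ => -(4 * z ^ 2) * (x - x3) * (x - x1) * (x - x2) := by
      funext x; ring
    rw [e]; exact h
  · intro x hx
    have e : -(4 * z ^ 2) * (x - x1) * (x - x2) * (x - x3)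
        = 4 * (z ^ 2 * ((x1 - x) * (x2 - x) * (x3 - x))) := by ring
    rw [fact x, e]
    have p : 0 < (x1 - x) * (x2 - x) * (x3 - x) :=
      mul_pos (mul_pos (by linarith) (by linarith)) (by linarith)
    have := mul_pos hz2 p
    linarith
  · intro x hxa hxb
    have e : -(4 * z ^ 2) * (x - x1) * (x - x2) * (x - x3)
        = 4 * (z ^ 2 * ((x - x1) * (x - x2) * (x3 - x))) := by ring
    rw [fact x, e]
    have p : 0 < (x - x1) * (x - x2) * (x3 - x) :=
      mul_pos (mul_pos (by linarith) (by linarith)) (by linarith)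
    have := mul_pos hz2 p
    linarith
  · intro x hxa hxb
    have e : -(4 * z ^ 2) * (x - x1) * (x - x2) * (x - x3)
        = -(4 * (z ^ 2 * ((x - x1) * (x2 - x) * (x3 - x)))) := by ring
    rw [fact x, e]
    have p : 0 < (x - x1) * (x2 - x) * (x3 - x) :=
      mul_pos (mul_pos (by linarith) (by linarith)) (by linarith)
    have := mul_pos hz2 p
    linarith
  · intro x hx
    have e : -(4 * z ^ 2) * (x - x1) * (x - x2) * (x - x3)
        = -(4 * (z ^ 2 * ((x - x1) * (x - x2) * (x - x3)))) := by ring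
    rw [fact x, e]
    have p : 0 < (x - x1) * (x - x2) * (x - x3) :=
      mul_pos (mul_pos (by linarith) (by linarith)) (by linarith)
    have := mul_pos hz2 p
    linarith
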